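/- There do not exist an open interval I, differentiable functions ξ₂, …, ξ_n : I → ℝ (n ≥ 4) and a differentiable function f : I → ℝ with f' ≠ 0, a real constant ρ, and three indices a, b, c ∈ {2,…,n} with ξ_a, ξ_b, ξ_c pairwise distinct at every point, such that: (i) ξᵢ' + ξᵢ² = ξⱼ' + ξⱼ² on I for all i, j; (ii) f'' = ρ + (n-1)(ξ₂' + ξ₂²) on I; and (iii) Σᵢ₌₂ⁿ ξᵢ² - ρ = (ξ_i + ξ_j)(Σᵢ₌₂ⁿ ξᵢ - f') on I for all pairs i ≠ j with ξ_i ≠ ξ_j pointwise. -/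
import Mathlib


theorem stmt_2 : ¬ ∃ (n : ℕ) (_ : 4 ≤ n) (α β : ℝ) (_ : α < β)
    (ξ : ℕ → ℝ → ℝ) (f : ℝ → ℝ) (ρ : ℝ) (a b c : ℕ),
    a ∈ Finset.Icc 2 n ∧ b ∈ Finset.Icc 2 n ∧ c ∈ Finset.Icc 2 n ∧
    (∀ s ∈ Set.Ioo α β, ξ a s ≠ ξ b s) ∧
    (∀ s ∈ Set.Ioo α β, ξ a s ≠ ξ c s) ∧
    (∀ s ∈ Set.Ioo α β, ξ b s ≠ ξ c s) ∧
    (∀ i ∈ Finset.Icc 2 n, ∀ s ∈ Set.Ioo α β, DifferentiableAt ℝ (ξ i) s) ∧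
    (∀ s ∈ Set.Ioo α β, DifferentiableAt ℝ f s) ∧
    (∀ s ∈ Set.Ioo α β, DifferentiableAt ℝ (deriv f) s) ∧
    (∀ s ∈ Set.Ioo α β, deriv f s ≠ 0) ∧
    (∀ i ∈ Finset.Icc 2 n, ∀ j ∈ Finset.Icc 2 n, ∀ s ∈ Set.Ioo α β,
      deriv (ξ i) s + (ξ i s) ^ 2 = deriv (ξ j) s + (ξ j s) ^ 2) ∧
    (∀ s ∈ Set.Ioo α β,
      deriv (deriv f) s = ρ + ((n : ℝ) - 1) * (deriv (ξ 2) s + (ξ 2 s) ^ 2)) ∧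
    (∀ i ∈ Finset.Icc 2 n, ∀ j ∈ Finset.Icc 2 n, i ≠ j →
      (∀ s ∈ Set.Ioo α β, ξ i s ≠ ξ j s) →
      ∀ s ∈ Set.Ioo α β,
        (∑ l ∈ Finset.Icc 2 n, (ξ l s) ^ 2) - ρ =
          (ξ i s + ξ j s) * ((∑ l ∈ Finset.Icc 2 n, ξ l s) - deriv f s)) := by
  rintro ⟨n, hn, α, β, hαβ, ξ, f, ρ, a, b, c, ha, hb, hc, hab, hac, hbc,
    hdiffξ, hdf, hddf, hf'ne, hi, hii, hiii⟩
  have hs₀ : (α + β) / 2 ∈ Set.Ioo α β := ⟨by linarith, by linarith⟩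
  set s₀ := (α + β) / 2
  have hab' : a ≠ b := fun h => hab s₀ hs₀ (by rw [h])
  have hac' : a ≠ c := fun h => hac s₀ hs₀ (by rw [h])
  have hbc' : b ≠ c := fun h => hbc s₀ hs₀ (by rw [h])
  have h2 : (2 : ℕ) ∈ Finset.Icc 2 n := Finset.mem_Icc.mpr ⟨le_refl 2, by omega⟩
  -- S = f' pointwise on the interval
  have hSf : ∀ s ∈ Set.Ioo α β,
      (∑ l ∈ Finset.Icc 2 n, ξ l s) = deriv f s := by
    intro s hs
    have e1 := hiii a ha b hb hab' hab s hs
    have e2 := hiii c hc b hb (Ne.symm hbc') (fun t ht => (hbc t ht).symm) s hs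
    have hz : (ξ a s - ξ c s) *
        ((∑ l ∈ Finset.Icc 2 n, ξ l s) - deriv f s) = 0 := by
      linear_combination e2 - e1
    rcases mul_eq_zero.mp hz with h | h
    · exact absurd (by linarith : ξ a s = ξ c s) (hac s hs)
    · linarith
  -- hence Q = ρ pointwise
  have hQρ : ∀ s ∈ Set.Ioo α β,
      (∑ l ∈ Finset.Icc 2 n, (ξ l s) ^ 2) = ρ := by
    intro s hs
    have e1 := hiii a ha b hb hab' hab s hs
    rw [hSf s hs, sub_self, mul_zero, sub_eq_zero] at e1
    exact e1
  -- and Q = -ρ pointwise, by differentiating S = f'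
  have hQρ' : ∀ s ∈ Set.Ioo α β,
      (∑ l ∈ Finset.Icc 2 n, (ξ l s) ^ 2) = -ρ := by
    intro s hs
    have heq : deriv (fun t => ∑ l ∈ Finset.Icc 2 n, ξ l t) s
        = deriv (deriv f) s := by
      apply Filter.EventuallyEq.deriv_eq
      exact Filter.eventuallyEq_of_mem (isOpen_Ioo.mem_nhds hs) hSf
    rw [deriv_fun_sum (fun l hl => hdiffξ l hl s hs)] at heq
    have hderiv : ∀ l ∈ Finset.Icc 2 n,
        deriv (ξ l) s = (deriv (ξ 2) s + (ξ 2 s) ^ 2) - (ξ l s) ^ 2 := by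
      intro l hl
      have := hi l hl 2 h2 s hs
      linarith
    rw [Finset.sum_congr rfl hderiv, Finset.sum_sub_distrib,
      Finset.sum_const, nsmul_eq_mul] at heq
    have hcard : ((Finset.Icc 2 n).card : ℝ) = (n : ℝ) - 1 := by
      rw [Nat.card_Icc]
      have : n + 1 - 2 = n - 1 := by omega
      rw [this, Nat.cast_sub (by omega)]
      norm_num
    rw [hcard, hii s hs] at heq
    linarith
  have hQ0 := hQρ s₀ hs₀
  have hQ0' := hQρ' s₀ hs₀
  have hzero : ∀ l ∈ Finset.Icc 2 n, (ξ l s₀) ^ 2 = 0 := by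
    apply (Finset.sum_eq_zero_iff_of_nonneg (fun l _ => sq_nonneg _)).mp
    linarith
  have hA : ξ a s₀ = 0 := by have := hzero a ha; nlinarith [this]
  have hB : ξ b s₀ = 0 := by have := hzero b hb; nlinarith [this]
  exact hab s₀ hs₀ (by rw [hA, hB])
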